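/- arXiv:1507.03535 — 8 statements merged into one kernel-verified Lean document; each statement's English description precedes it below -/
import Mathlib

section
/- Let K be a field equipped with a nonarchimedean absolute value |·|, and let λ₁, λ₂, λ₃ ∈ K, each different from 1, satisfy the fixed-point residue formula. Then it is not the case that all three are repelling, i.e., one cannot have |λ₁| > 1, |λ₂| > 1, and |λ₃| > 1 simultaneously. -/
lemma aux_term {K : Type*} [Field K] (v : AbsoluteValue K ℝ) (hna : IsNonarchimedean v)
    (l : K) (hl : 1 < v l) : v (1 / (1 - l)) < 1 := by
  have hl0 : l ≠ 0 := by
    intro h; rw [h] at hl; simp at hl; linarith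
  have h1l : v (1 - l) = v l := by
    have h1 : v (1 : K) = 1 := v.map_one
    have := hna.add_eq_max_of_ne (x := (1 : K)) (y := -l) (by
      rw [v.map_neg, h1]; exact ne_of_lt hl)
    rw [v.map_neg, h1] at this
    simpa [sub_eq_add_neg, max_eq_right (le_of_lt hl)] using this
  have hne : (1 : K) - l ≠ 0 := by
    intro h
    have : v (1 - l) = 0 := by rw [h]; simp
    rw [h1l] at this; linarith
  rw [one_div, map_inv₀, h1l]
  rw [inv_lt_one_iff₀]
  right; exact hl

/-- If `λ₁, λ₂, λ₃` in a nonarchimedean valued field `K`, each different from `1`,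
satisfy the fixed-point residue formula, then they cannot all be repelling. -/
theorem stmt_1 {K : Type*} [Field K] (v : AbsoluteValue K ℝ) (hna : IsNonarchimedean v)
    (l1 l2 l3 : K) (h1 : l1 ≠ 1) (h2 : l2 ≠ 1) (h3 : l3 ≠ 1)
    (hres : 1 / (1 - l1) + 1 / (1 - l2) + 1 / (1 - l3) = 1) :
    ¬(1 < v l1 ∧ 1 < v l2 ∧ 1 < v l3) := by
  rintro ⟨a1, a2, a3⟩
  have t1 := aux_term v hna l1 a1
  have t2 := aux_term v hna l2 a2
  have t3 := aux_term v hna l3 a3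
  have hsum : v (1 / (1 - l1) + 1 / (1 - l2) + 1 / (1 - l3)) < 1 := by
    calc v (1 / (1 - l1) + 1 / (1 - l2) + 1 / (1 - l3))
        ≤ max (v (1 / (1 - l1) + 1 / (1 - l2))) (v (1 / (1 - l3))) := hna _ _
      _ ≤ max (max (v (1 / (1 - l1))) (v (1 / (1 - l2)))) (v (1 / (1 - l3))) := by
          exact max_le_max (hna _ _) le_rfl
      _ < 1 := by rw [max_lt_iff, max_lt_iff]; exact ⟨⟨t1, t2⟩, t3⟩
  rw [hres, v.map_one] at hsum
  linarith
end

section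
/- Let K be a field equipped with a nonarchimedean absolute value |·|, and let λ₁, λ₂, λ₃ ∈ K, each different from 1, satisfy the fixed-point residue formula. If |λ₁| > 1 and |λ₂| > 1, then |λ₃| < 1. (If a quadratic rational map has two repelling classical fixed points, the third fixed point is attracting.) -/
/-- If `|x| > |y|` then `|x + y| = |x|` for a nonarchimedean absolute value. -/
lemma na_add_eq_left {K : Type*} [Field K] (v : AbsoluteValue K ℝ)
    (hna : IsNonarchimedean v) {x y : K} (h : v y < v x) : v (x + y) = v x := by
  have hle : v (x + y) ≤ v x := le_trans (hna x y) (max_le le_rfl h.le)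
  refine le_antisymm hle ?_
  have h2 := hna (x + y) (-y)
  rw [add_neg_cancel_right, v.map_neg] at h2
  by_contra hlt
  push_neg at hlt
  exact absurd h2 (not_le.mpr (max_lt hlt h))

/-- If `λ₁, λ₂, λ₃` in a nonarchimedean valued field `K`, each different from `1`,
satisfy the fixed-point residue formula, and `|λ₁| > 1` and `|λ₂| > 1`, then `|λ₃| < 1`. -/
theorem stmt_2 {K : Type*} [Field K] (v : AbsoluteValue K ℝ) (hna : IsNonarchimedean v)
    (l1 l2 l3 : K) (h1 : l1 ≠ 1) (h2 : l2 ≠ 1) (h3 : l3 ≠ 1)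
    (hres : 1 / (1 - l1) + 1 / (1 - l2) + 1 / (1 - l3) = 1)
    (hr1 : 1 < v l1) (hr2 : 1 < v l2) :
    v l3 < 1 := by
  have hv1 : v 1 = 1 := v.map_one
  have hn1 : (1 : K) - l1 ≠ 0 := sub_ne_zero.mpr (Ne.symm h1)
  have hn2 : (1 : K) - l2 ≠ 0 := sub_ne_zero.mpr (Ne.symm h2)
  have hn3 : (1 : K) - l3 ≠ 0 := sub_ne_zero.mpr (Ne.symm h3)
  -- |1 - lᵢ| = |lᵢ| > 1 for i = 1,2
  have e1 : v (1 - l1) = v l1 := by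
    rw [show (1 : K) - l1 = -(l1 + (-1)) by ring, v.map_neg]
    exact na_add_eq_left v hna (by rw [v.map_neg, hv1]; exact hr1)
  have e2 : v (1 - l2) = v l2 := by
    rw [show (1 : K) - l2 = -(l2 + (-1)) by ring, v.map_neg]
    exact na_add_eq_left v hna (by rw [v.map_neg, hv1]; exact hr2)
  set a : K := 1 / (1 - l1) with ha
  set b : K := 1 / (1 - l2) with hb
  have hva : v a < 1 := by
    rw [ha, one_div, map_inv₀, e1]
    exact inv_lt_one_of_one_lt₀ hr1
  have hvb : v b < 1 := by
    rw [hb, one_div, map_inv₀, e2]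
    exact inv_lt_one_of_one_lt₀ hr2
  have hvab : v (a + b) < 1 := lt_of_le_of_lt (hna a b) (max_lt hva hvb)
  -- u := 1/(1-l3) = 1 - (a+b)
  have hu : 1 / (1 - l3) = 1 - (a + b) := by linear_combination hres
  have hvu : v (1 / (1 - l3)) = 1 := by
    rw [hu, sub_eq_add_neg]
    have := na_add_eq_left v hna (x := (1 : K)) (y := -(a + b))
      (by rw [v.map_neg, hv1]; exact hvab)
    rw [this, hv1]
  have hv13 : v (1 - l3) = 1 := by
    rw [one_div, map_inv₀, inv_eq_one] at hvu
    exact hvu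
  have h' : (1 : K) = (1 - (a + b)) * (1 - l3) := by
    rw [← hu]; field_simp
  have hl3 : l3 = -(a + b) * (1 - l3) := by linear_combination h'
  have hvcalc : v l3 = v (-(a + b) * (1 - l3)) := congrArg v hl3
  rw [hvcalc, v.map_mul, v.map_neg, hv13, mul_one]
  exact hvab
end

section
/- Let K be a field equipped with a nonarchimedean absolute value |·|, and let λ₁, λ₂, λ₃ ∈ K, each different from 1, satisfy the fixed-point residue formula. If |λ₁| > 1, |λ₂| ≤ 1, and |λ₃| ≤ 1, then |λ₂| = 1 and |λ₃| = 1. (If a quadratic rational map has exactly one repelling classical fixed point, then the other two fixed points are indifferent.) -/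
/-- If `λ₁, λ₂, λ₃` in a nonarchimedean valued field `K`, each different from `1`,
satisfy the fixed-point residue formula, and `|λ₁| > 1`, `|λ₂| ≤ 1`, `|λ₃| ≤ 1`, then
`|λ₂| = 1` and `|λ₃| = 1`. -/
theorem stmt_3 {K : Type*} [Field K] (v : AbsoluteValue K ℝ) (hna : IsNonarchimedean v)
    (l1 l2 l3 : K) (h1 : l1 ≠ 1) (h2 : l2 ≠ 1) (h3 : l3 ≠ 1)
    (hres : 1 / (1 - l1) + 1 / (1 - l2) + 1 / (1 - l3) = 1)
    (hr1 : 1 < v l1) (hr2 : v l2 ≤ 1) (hr3 : v l3 ≤ 1) :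
    v l2 = 1 ∧ v l3 = 1 := by
  have n1 : (1 : K) - l1 ≠ 0 := sub_ne_zero.mpr (Ne.symm h1)
  have n2 : (1 : K) - l2 ≠ 0 := sub_ne_zero.mpr (Ne.symm h2)
  have n3 : (1 : K) - l3 ≠ 0 := sub_ne_zero.mpr (Ne.symm h3)
  have key : l1 * (1 - l2 * l3) = (1 - l2) + (1 - l3) := by
    field_simp at hres
    ring_nf at hres ⊢
    linear_combination -hres
  have v1 : v 1 = 1 := v.map_one
  have hv2 : v (1 - l2) ≤ 1 := by
    have := hna 1 (-l2)
    simpa [sub_eq_add_neg, v1] using this.trans (max_le le_rfl (by simpa using hr2))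
  have hv3 : v (1 - l3) ≤ 1 := by
    have := hna 1 (-l3)
    simpa [sub_eq_add_neg, v1] using this.trans (max_le le_rfl (by simpa using hr3))
  have hrhs : v ((1 - l2) + (1 - l3)) ≤ 1 :=
    (hna _ _).trans (max_le hv2 hv3)
  have hlhs : v l1 * v (1 - l2 * l3) ≤ 1 := by
    rw [← v.map_mul, key]; exact hrhs
  have hsmall : v (1 - l2 * l3) < 1 := by
    by_contra h
    push_neg at h
    have : (1:ℝ) < v l1 * v (1 - l2 * l3) :=
      lt_of_lt_of_le hr1 (le_mul_of_one_le_right (le_of_lt (lt_of_lt_of_le zero_lt_one (le_of_lt hr1))) h)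
    linarith
  have hmul : v (l2 * l3) = 1 := by
    have hub : v (l2 * l3) ≤ 1 := by
      rw [v.map_mul]; exact mul_le_one₀ hr2 (v.nonneg _) hr3
    have hlb : 1 ≤ v (l2 * l3) := by
      have h := hna (l2 * l3) (1 - l2 * l3)
      have : v 1 ≤ max (v (l2 * l3)) (v (1 - l2 * l3)) := by
        simpa using h
      rw [v1] at this
      rcases max_cases (v (l2 * l3)) (v (1 - l2 * l3)) with ⟨he, _⟩ | ⟨he, _⟩
      · rwa [he] at this
      · rw [he] at this; linarith
    linarith
  rw [v.map_mul] at hmul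
  constructor
  · nlinarith [v.nonneg l2, v.nonneg l3]
  · nlinarith [v.nonneg l2, v.nonneg l3]
end

section
/- Let K be a field equipped with a nonarchimedean absolute value |·|, and let λ₁, λ₂, λ₃ ∈ K, each different from 1, satisfy the fixed-point residue formula. Suppose |λ₁| ≤ 1, |λ₂| ≤ 1, |λ₃| ≤ 1, and suppose all pairwise products reduce to 1 modulo the maximal ideal, i.e., |λ₁λ₂ − 1| < 1, |λ₁λ₃ − 1| < 1, and |λ₂λ₃ − 1| < 1. Then |λ₁ − 1| < 1, |λ₂ − 1| < 1, and |λ₃ − 1| < 1, i.e., all three multipliers reduce to 1 modulo the maximal ideal. -/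
/-- If `λ₁, λ₂, λ₃` in a nonarchimedean valued field `K`, each different from `1`,
satisfy the fixed-point residue formula, all have absolute value at most `1`, and all pairwise
products reduce to `1` modulo the maximal ideal, then all three multipliers reduce to `1`. -/
theorem stmt_4 {K : Type*} [Field K] (v : AbsoluteValue K ℝ) (hna : IsNonarchimedean v)
    (l1 l2 l3 : K) (h1 : l1 ≠ 1) (h2 : l2 ≠ 1) (h3 : l3 ≠ 1)
    (hres : 1 / (1 - l1) + 1 / (1 - l2) + 1 / (1 - l3) = 1)
    (hb1 : v l1 ≤ 1) (hb2 : v l2 ≤ 1) (hb3 : v l3 ≤ 1)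
    (hp12 : v (l1 * l2 - 1) < 1) (hp13 : v (l1 * l3 - 1) < 1) (hp23 : v (l2 * l3 - 1) < 1) :
    v (l1 - 1) < 1 ∧ v (l2 - 1) < 1 ∧ v (l3 - 1) < 1 := by
  have hsub : ∀ a b : K, v (a - b) ≤ max (v a) (v b) := by
    intro a b
    have := hna a (-b)
    simpa [sub_eq_add_neg] using this
  -- absolute value 1 for things close to 1
  have vone : ∀ x : K, v (x - 1) < 1 → v x = 1 := by
    intro x hx
    have hle : v x ≤ 1 := by
      have := hna (x - 1) 1
      simp only [sub_add_cancel, map_one] at this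
      exact this.trans (by simp [hx.le])
    have hge : (1 : ℝ) ≤ v x := by
      have h := hsub x (x - 1)
      simp only [sub_sub_cancel, map_one] at h
      rcases le_max_iff.mp h with h' | h'
      · exact h'
      · linarith
    linarith
  have v12 : v l1 * v l2 = 1 := by rw [← map_mul]; exact vone _ hp12
  have v13 : v l1 * v l3 = 1 := by rw [← map_mul]; exact vone _ hp13
  have vnn1 := v.nonneg l1
  have vnn2 := v.nonneg l2
  have vnn3 := v.nonneg l3
  have v1 : v l1 = 1 := by nlinarith
  have v2 : v l2 = 1 := by nlinarith
  have v3 : v l3 = 1 := by nlinarith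
  -- pairwise differences small
  have d12 : v (l1 - l2) < 1 := by
    have e : l3 * (l1 - l2) = (l1 * l3 - 1) - (l2 * l3 - 1) := by ring
    have h := hsub (l1 * l3 - 1) (l2 * l3 - 1)
    rw [← e, map_mul, v3, one_mul] at h
    exact h.trans_lt (max_lt hp13 hp23)
  have d13 : v (l1 - l3) < 1 := by
    have e : l2 * (l1 - l3) = (l1 * l2 - 1) - (l3 * l2 - 1) := by ring
    have h := hsub (l1 * l2 - 1) (l3 * l2 - 1)
    rw [← e, map_mul, v2, one_mul] at h
    refine h.trans_lt (max_lt hp12 ?_)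
    rwa [mul_comm]
  -- square close to 1
  have sq : v ((l1 - 1) * (l1 + 1)) < 1 := by
    have e : (l1 - 1) * (l1 + 1) = l1 * (l1 - l2) + (l1 * l2 - 1) := by ring
    rw [e]
    refine (hna _ _).trans_lt (max_lt ?_ hp12)
    rw [map_mul, v1, one_mul]; exact d12
  -- main claim
  have vd1 : v (l1 - 1) < 1 := by
    by_contra hcon
    push_neg at hcon
    have hle1 : v (l1 - 1) ≤ 1 := by
      have := hsub l1 1
      simp [v1] at this
      exact this
    have heq1 : v (l1 - 1) = 1 := le_antisymm hle1 hcon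
    have vp1 : v (l1 + 1) < 1 := by
      rw [map_mul, heq1, one_mul] at sq
      exact sq
    have hv2 : (1 : ℝ) ≤ v 2 := by
      have h := hsub (l1 + 1) 2
      rw [show l1 + 1 - 2 = l1 - 1 by ring, heq1] at h
      rcases le_max_iff.mp h with h' | h'
      · linarith
      · exact h'
    have vp2 : v (l2 + 1) < 1 := by
      have e : l2 + 1 = (l1 + 1) - (l1 - l2) := by ring
      rw [e]
      exact (hsub _ _).trans_lt (max_lt vp1 d12)
    have vp3 : v (l3 + 1) < 1 := by
      have e : l3 + 1 = (l1 + 1) - (l1 - l3) := by ring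
      rw [e]
      exact (hsub _ _).trans_lt (max_lt vp1 d13)
    have n1 : (1 : K) - l1 ≠ 0 := sub_ne_zero.mpr (Ne.symm h1)
    have n2 : (1 : K) - l2 ≠ 0 := sub_ne_zero.mpr (Ne.symm h2)
    have n3 : (1 : K) - l3 ≠ 0 := sub_ne_zero.mpr (Ne.symm h3)
    have hS : (1 - l2) * (1 - l3) + (1 - l1) * (1 - l3) + (1 - l1) * (1 - l2)
        - (1 - l1) * (1 - l2) * (1 - l3) = 0 := by
      field_simp at hres
      linear_combination hres
    have h4 : (4 : K) = ((l1 + 1) * (l2 + 1) + (l1 + 1) * (l3 + 1) + (l2 + 1) * (l3 + 1))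
        - (l1 + 1) * (l2 + 1) * (l3 + 1) := by
      linear_combination hS
    have vε1 : v (l1 + 1) ≤ 1 := vp1.le
    have vε2 : v (l2 + 1) ≤ 1 := vp2.le
    have vε3 : v (l3 + 1) ≤ 1 := vp3.le
    have nn1 := v.nonneg (l1 + 1)
    have nn2 := v.nonneg (l2 + 1)
    have nn3 := v.nonneg (l3 + 1)
    have t12 : v ((l1 + 1) * (l2 + 1)) < 1 := by
      rw [map_mul]; exact lt_of_le_of_lt (mul_le_of_le_one_left nn2 vε1) vp2
    have t13 : v ((l1 + 1) * (l3 + 1)) < 1 := by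
      rw [map_mul]; exact lt_of_le_of_lt (mul_le_of_le_one_left nn3 vε1) vp3
    have t23 : v ((l2 + 1) * (l3 + 1)) < 1 := by
      rw [map_mul]; exact lt_of_le_of_lt (mul_le_of_le_one_left nn3 vε2) vp3
    have t123 : v ((l1 + 1) * (l2 + 1) * (l3 + 1)) < 1 := by
      rw [map_mul, map_mul]
      refine lt_of_le_of_lt (mul_le_of_le_one_left nn3 ?_) vp3
      exact mul_le_one₀ vε1 nn2 vε2
    have v4lt : v 4 < 1 := by
      rw [h4]
      refine (hsub _ _).trans_lt (max_lt ?_ t123)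
      exact (hna _ _).trans_lt (max_lt ((hna _ _).trans_lt (max_lt t12 t13)) t23)
    have h22 : v 4 = v 2 * v 2 := by
      rw [← map_mul]; norm_num
    have hge : (1 : ℝ) ≤ v 2 * v 2 := by nlinarith [v.nonneg 2, hv2]
    rw [h22] at v4lt
    linarith
  refine ⟨vd1, ?_, ?_⟩
  · have e : l2 - 1 = (l1 - 1) - (l1 - l2) := by ring
    rw [e]
    exact (hsub _ _).trans_lt (max_lt vd1 d12)
  · have e : l3 - 1 = (l1 - 1) - (l1 - l3) := by ring
    rw [e]
    exact (hsub _ _).trans_lt (max_lt vd1 d13)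
end

section
/- Let K be a field equipped with a nonarchimedean absolute value |·|, and let λ₁, λ₂, λ₃ ∈ K, each different from 1, satisfy the fixed-point residue formula. Suppose |λ₁| ≤ 1, |λ₂| ≤ 1, |λ₃| = 1, and 0 < |λ₁λ₂ − 1| < 1, and let ρ ∈ K satisfy ρ² = λ₁λ₂ − 1. Then |λ₂| = 1, |(λ₁ + λ₂ − 2)/ρ²| = 1, |(λ₁ + λ₂ − 2)/ρ| < 1, and |(λ₂ − 1)/ρ| ≤ 1. (These are the coefficient bounds showing that the conjugate of φ(z) = (z² + λ₁z)/(λ₂z + 1) by γ(z) = ρz − 1, after normalization, has all coefficients in the valuation ring and resultant −1, hence good reduction.) -/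
/-- With `λ₁, λ₂, λ₃` as in the residue formula, `|λ₁| ≤ 1`, `|λ₂| ≤ 1`,
`|λ₃| = 1`, `0 < |λ₁λ₂ - 1| < 1`, and `ρ² = λ₁λ₂ - 1`, one has `|λ₂| = 1`,
`|(λ₁+λ₂-2)/ρ²| = 1`, `|(λ₁+λ₂-2)/ρ| < 1`, and `|(λ₂-1)/ρ| ≤ 1`. -/
theorem stmt_8 {K : Type*} [Field K] (v : AbsoluteValue K ℝ) (hna : IsNonarchimedean v)
    (l1 l2 l3 ρ : K) (h1 : l1 ≠ 1) (h2 : l2 ≠ 1) (h3 : l3 ≠ 1)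
    (hres : 1 / (1 - l1) + 1 / (1 - l2) + 1 / (1 - l3) = 1)
    (hb1 : v l1 ≤ 1) (hb2 : v l2 ≤ 1) (hb3 : v l3 = 1)
    (hp0 : 0 < v (l1 * l2 - 1)) (hp1 : v (l1 * l2 - 1) < 1)
    (hρ : ρ ^ 2 = l1 * l2 - 1) :
    v l2 = 1 ∧ v ((l1 + l2 - 2) / ρ ^ 2) = 1 ∧ v ((l1 + l2 - 2) / ρ) < 1 ∧
      v ((l2 - 1) / ρ) ≤ 1 := by
  have hm1 : l1 * l2 - 1 ≠ 0 := fun h => by simp [h] at hp0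
  have hρ0 : ρ ≠ 0 := by
    intro h; rw [h] at hρ; exact hm1 (by simpa using hρ.symm)
  have hvρ : v ρ ^ 2 = v (l1 * l2 - 1) := by
    rw [← v.map_pow, hρ]
  have hvρpos : 0 < v ρ := v.pos hρ0
  have hvρlt : v ρ < 1 := by nlinarith [hvρ, hp1, hvρpos]
  -- v (l1*l2) = 1
  have hprod : v (l1 * l2) = 1 := by
    have h1' : v (l1 * l2) ≤ 1 := by
      have := hna (l1 * l2 - 1) 1
      simp only [sub_add_cancel, v.map_one] at this
      exact this.trans (max_le hp1.le le_rfl)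
    have h2' : (1:ℝ) ≤ v (l1 * l2) := by
      have := hna (1 - l1 * l2) (l1 * l2)
      simp only [sub_add_cancel, v.map_one] at this
      have hneg : v (1 - l1 * l2) = v (l1 * l2 - 1) := by
        rw [← v.map_neg]; ring_nf
      rcases le_max_iff.mp this with h | h
      · rw [hneg] at h; linarith
      · exact h
    linarith
  have hv1 : v l1 = 1 := by
    have := v.map_mul l1 l2
    rw [hprod] at this
    nlinarith [v.nonneg l1, v.nonneg l2]
  have hv2 : v l2 = 1 := by
    have := v.map_mul l1 l2
    rw [hprod, hv1] at this
    linarith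
  -- key identity from the residue formula
  have e1 : (1:K) - l1 ≠ 0 := sub_ne_zero.mpr (fun h => h1 h.symm)
  have e2 : (1:K) - l2 ≠ 0 := sub_ne_zero.mpr (fun h => h2 h.symm)
  have e3 : (1:K) - l3 ≠ 0 := sub_ne_zero.mpr (fun h => h3 h.symm)
  have key : l1 + l2 - 2 = l3 * (l1 * l2 - 1) := by
    field_simp at hres
    linear_combination -hres
  -- second goal
  have g2 : v ((l1 + l2 - 2) / ρ ^ 2) = 1 := by
    rw [hρ, key, mul_div_assoc, div_self hm1, mul_one, hb3]
  -- third goal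
  have g3 : v ((l1 + l2 - 2) / ρ) < 1 := by
    have : (l1 + l2 - 2) / ρ = l3 * ρ := by
      rw [key, ← hρ]; field_simp
    rw [this, v.map_mul, hb3, one_mul]; exact hvρlt
  -- fourth goal
  have g4 : v ((l2 - 1) / ρ) ≤ 1 := by
    rw [map_div₀, div_le_one hvρpos]
    by_contra hcon
    push_neg at hcon
    have hl2m1 : 0 < v (l2 - 1) := lt_trans hvρpos hcon
    -- (l1-1)*(l2-1) = (l1*l2-1)*(1-l3)
    have idty : (l1 - 1) * (l2 - 1) = (l1 * l2 - 1) * (1 - l3) := by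
      linear_combination -key
    have hv13 : v (1 - l3) ≤ 1 := by
      have := hna 1 (-l3)
      simpa [sub_eq_add_neg, hb3] using this
    have hprod2 : v (l1 - 1) * v (l2 - 1) ≤ v ρ ^ 2 := by
      have := congrArg v idty
      rw [v.map_mul, v.map_mul, ← hvρ] at this
      rw [this]
      nlinarith [v.nonneg (l1*l2-1), hvρ]
    have hsmall : v (l1 - 1) < v (l2 - 1) := by
      have h1' : v (l1 - 1) * v (l2 - 1) < v (l2 - 1) * v (l2 - 1) := by
        calc v (l1 - 1) * v (l2 - 1) ≤ v ρ ^ 2 := hprod2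
        _ < v (l2 - 1) * v (l2 - 1) := by nlinarith
      exact lt_of_mul_lt_mul_right h1' (le_of_lt hl2m1)
    -- v (l1 + l2 - 2) = v ρ ^ 2
    have hsum : v (l1 + l2 - 2) = v ρ ^ 2 := by
      rw [key, v.map_mul, hb3, one_mul, hvρ]
    -- but v (l2 - 1) ≤ max (v (l1+l2-2)) (v (l1-1))
    have hd : l2 - 1 = (l1 + l2 - 2) + (-(l1 - 1)) := by ring
    have := hna (l1 + l2 - 2) (-(l1 - 1))
    rw [← hd, v.map_neg, hsum] at this
    rcases le_max_iff.mp this with h | h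
    · nlinarith
    · linarith
  exact ⟨hv2, g2, g3, g4⟩
end

section
/- Let K be a field equipped with a nonarchimedean absolute value |·|, and let λ₁, λ₂, λ₃ ∈ K, each different from 1, satisfy the fixed-point residue formula. If |λ₁| > 1 and |λ₂| = 1, then |λ₃| = 1 and |λ₂λ₃ − 1| = |λ₂ − 1|²/|λ₁| < 1. (In particular, the reduction of λ₃ modulo the maximal ideal is the inverse of the reduction of λ₂.) -/
/-- Ultrametric: if `v b < v a` then `v (a + b) = v a`. -/
lemma aux_add_eq {K : Type*} [Field K] (v : AbsoluteValue K ℝ)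
    (hna : IsNonarchimedean v) {a b : K} (h : v b < v a) : v (a + b) = v a := by
  have h1 : v (a + b) ≤ v a := le_trans (hna a b) (max_le le_rfl h.le)
  have h2 : v a ≤ max (v (a + b)) (v b) := by
    have := hna (a + b) (-b)
    simpa [v.map_neg] using this
  rcases le_max_iff.mp h2 with h' | h'
  · exact le_antisymm h1 h'
  · exact absurd h' (not_le.mpr h)

/-- If `λ₁, λ₂, λ₃` in a nonarchimedean valued field `K`, each different from `1`,
satisfy the fixed-point residue formula, and `|λ₁| > 1`, `|λ₂| = 1`, then `|λ₃| = 1` and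
`|λ₂λ₃ − 1| = |λ₂ − 1|²/|λ₁| < 1`. -/
theorem stmt_12 {K : Type*} [Field K] (v : AbsoluteValue K ℝ) (hna : IsNonarchimedean v)
    (l1 l2 l3 : K) (h1 : l1 ≠ 1) (h2 : l2 ≠ 1) (h3 : l3 ≠ 1)
    (hres : 1 / (1 - l1) + 1 / (1 - l2) + 1 / (1 - l3) = 1)
    (hr1 : 1 < v l1) (hr2 : v l2 = 1) :
    v l3 = 1 ∧ v (l2 * l3 - 1) = v (l2 - 1) ^ 2 / v l1 ∧ v (l2 * l3 - 1) < 1 := by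
  have d1 : (1 : K) - l1 ≠ 0 := sub_ne_zero.mpr (Ne.symm h1)
  have d2 : (1 : K) - l2 ≠ 0 := sub_ne_zero.mpr (Ne.symm h2)
  have d3 : (1 : K) - l3 ≠ 0 := sub_ne_zero.mpr (Ne.symm h3)
  have hkey : l1 * l2 * l3 = l1 + l2 + l3 - 2 := by
    field_simp at hres
    linear_combination hres
  -- v of l1*l2 - 1
  have hv12 : v (l1 * l2) = v l1 := by rw [v.map_mul, hr2, mul_one]
  have hone : v (1 : K) = 1 := v.map_one
  have hv12m1 : v (l1 * l2 - 1) = v l1 := by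
    have := aux_add_eq v hna (a := l1 * l2) (b := -1) (by rw [hv12, v.map_neg, hone]; exact hr1)
    rw [← sub_eq_add_neg] at this
    rw [this, hv12]
  have h12ne : l1 * l2 - 1 ≠ 0 := by
    intro h
    rw [h, v.map_zero] at hv12m1
    linarith
  have hv1pos : 0 < v l1 := lt_trans one_pos hr1
  -- v (l2 - 2) ≤ 1
  have hv2 : v (2 : K) ≤ 1 := by
    have := hna (1 : K) 1
    rw [hone, max_self] at this
    calc v (2 : K) = v (1 + 1 : K) := by norm_num
    _ ≤ 1 := this
  have hvl2m2 : v (l2 - 2) ≤ 1 := by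
    have := hna l2 (-2)
    rw [v.map_neg] at this
    exact le_trans (by simpa [sub_eq_add_neg] using this) (max_le hr2.le hv2)
  -- v (l1 + l2 - 2) = v l1
  have hnum : v (l1 + l2 - 2) = v l1 := by
    have := aux_add_eq v hna (a := l1) (b := l2 - 2) (lt_of_le_of_lt hvl2m2 hr1)
    simpa [add_sub_assoc] using this
  -- l3 * (l1*l2 - 1) = l1 + l2 - 2
  have heq3 : l3 * (l1 * l2 - 1) = l1 + l2 - 2 := by linear_combination hkey
  have hv3 : v l3 = 1 := by
    have : v l3 * v l1 = v l1 := by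
      rw [← hv12m1, ← v.map_mul, heq3, hnum, hv12m1]
    have := mul_right_cancel₀ (ne_of_gt hv1pos) (this.trans (one_mul (v l1)).symm)
    exact this
  -- (l2*l3 - 1)*(l1*l2 - 1) = (l2 - 1)^2
  have heq4 : (l2 * l3 - 1) * (l1 * l2 - 1) = (l2 - 1) ^ 2 := by
    linear_combination l2 * hkey
  have hveq : v (l2 * l3 - 1) * v l1 = v (l2 - 1) ^ 2 := by
    rw [← hv12m1, ← v.map_mul, heq4, v.map_pow]
  have hmain : v (l2 * l3 - 1) = v (l2 - 1) ^ 2 / v l1 := by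
    field_simp
    linarith [hveq]
  refine ⟨hv3, hmain, ?_⟩
  have hvl2m1 : v (l2 - 1) ≤ 1 := by
    have := hna l2 (-1)
    rw [v.map_neg, hone] at this
    exact le_trans (by simpa [sub_eq_add_neg] using this) (max_le hr2.le le_rfl)
  have : v (l2 - 1) ^ 2 ≤ 1 := by
    have h0 : 0 ≤ v (l2 - 1) := v.nonneg _
    nlinarith
  rw [hmain, div_lt_one hv1pos]
  linarith
end

section
/- Let K be a field equipped with a nonarchimedean absolute value |·|, and let λ₁, λ₂, λ₃ ∈ K, each different from 1, satisfy the fixed-point residue formula. Suppose |λ₁| > 1, |λ₂| = 1, and |λ₂ − 1| = 1. Set σ₁ = λ₁ + λ₂ + λ₃ and σ₂ = λ₁λ₂ + λ₁λ₃ + λ₂λ₃. Then |σ₁ − λ₁| < |λ₁|, |σ₂ − λ₁(λ₂ + λ₃)| < |λ₁|, and |λ₂ + λ₃ − 2| = 1. (Hence [σ₁ : σ₂ : 1] specializes to the boundary point [1 : x̃ : 0] of the compactified moduli space, where x̃ = λ̃ + λ̃⁻¹ ≠ 2 for λ̃ the reduction of λ₂; this is the potential multiplicative reduction stratum (W2).)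 -/
lemma nonarch_sub_eq {K : Type*} [Field K] (v : AbsoluteValue K ℝ)
    (hna : IsNonarchimedean v) {a b : K} (hlt : v b < v a) : v (a - b) = v a := by
  have h1 : v (a - b) ≤ max (v a) (v b) := by
    have := hna a (-b); simpa [sub_eq_add_neg] using this
  have h2 : v a ≤ max (v (a - b)) (v b) := by
    have := hna (a - b) b; simpa using this
  rcases max_cases (v (a - b)) (v b) with ⟨he, -⟩ | ⟨he, -⟩
  · rw [he] at h2
    exact le_antisymm (le_trans h1 (max_le le_rfl hlt.le)) h2
  · rw [he] at h2; exact absurd (lt_of_lt_of_le hlt h2) (lt_irrefl _)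

/-- potential multiplicative reduction stratum (W2): If `λ₁, λ₂, λ₃`, each
different from `1`, satisfy the fixed-point residue formula, with `|λ₁| > 1`, `|λ₂| = 1`, and
`|λ₂ − 1| = 1`, then for `σ₁ = λ₁+λ₂+λ₃` and `σ₂ = λ₁λ₂+λ₁λ₃+λ₂λ₃` one has
`|σ₁ − λ₁| < |λ₁|`, `|σ₂ − λ₁(λ₂+λ₃)| < |λ₁|`, and `|λ₂ + λ₃ − 2| = 1`. -/
theorem stmt_13 {K : Type*} [Field K] (v : AbsoluteValue K ℝ) (hna : IsNonarchimedean v)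
    (l1 l2 l3 : K) (h1 : l1 ≠ 1) (h2 : l2 ≠ 1) (h3 : l3 ≠ 1)
    (hres : 1 / (1 - l1) + 1 / (1 - l2) + 1 / (1 - l3) = 1)
    (hr1 : 1 < v l1) (hr2 : v l2 = 1) (hr2' : v (l2 - 1) = 1)
    (σ₁ σ₂ : K) (hσ₁ : σ₁ = l1 + l2 + l3) (hσ₂ : σ₂ = l1 * l2 + l1 * l3 + l2 * l3) :
    v (σ₁ - l1) < v l1 ∧ v (σ₂ - l1 * (l2 + l3)) < v l1 ∧ v (l2 + l3 - 2) = 1 := by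
  have hn1 : (1 : K) - l1 ≠ 0 := sub_ne_zero.mpr (Ne.symm h1)
  have hn2 : (1 : K) - l2 ≠ 0 := sub_ne_zero.mpr (Ne.symm h2)
  have hn3 : (1 : K) - l3 ≠ 0 := sub_ne_zero.mpr (Ne.symm h3)
  have heq : l1 * l2 * l3 = l1 + l2 + l3 - 2 := by
    field_simp at hres
    linear_combination hres
  -- norm of l1*l2 - 1 is v l1
  have hv2 : v (2 : K) ≤ 1 := by
    have h21 : (2 : K) = 1 + 1 := by norm_num
    rw [h21]
    refine le_trans (hna 1 1) ?_
    simp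
  have hvl1l2 : v (l1 * l2) = v l1 := by rw [v.map_mul, hr2, mul_one]
  have hml1 : v (l1 * l2 - 1) = v l1 := by
    rw [nonarch_sub_eq v hna (by rw [hvl1l2, v.map_one]; exact hr1), hvl1l2]
  have hne : l1 * l2 - 1 ≠ 0 := by
    intro h
    rw [h, v.map_zero] at hml1
    linarith
  have hkey : l3 * (l1 * l2 - 1) = l1 + l2 - 2 := by linear_combination heq
  have hvl2m2 : v (l2 - 2) ≤ 1 := by
    rw [sub_eq_add_neg]
    refine le_trans (hna l2 (-2)) ?_
    rw [v.map_neg]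
    exact max_le hr2.le hv2
  have hnum : v (l1 + l2 - 2) = v l1 := by
    have : l1 + l2 - 2 = l1 - (2 - l2) := by ring
    rw [this, nonarch_sub_eq v hna]
    calc v (2 - l2) = v (l2 - 2) := by rw [← v.map_neg]; ring_nf
    _ ≤ 1 := hvl2m2
    _ < v l1 := hr1
  have hvl3 : v l3 = 1 := by
    have := congrArg v hkey
    rw [v.map_mul, hml1, hnum] at this
    have hpos : (0:ℝ) < v l1 := lt_trans one_pos hr1
    have h' : v l3 * v l1 = 1 * v l1 := by linarith
    exact mul_right_cancel₀ (ne_of_gt hpos) h'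
  have hvl2l3 : v (l2 + l3) ≤ 1 := by
    have := hna l2 l3
    simpa [hr2, hvl3] using this
  refine ⟨?_, ?_, ?_⟩
  · have : σ₁ - l1 = l2 + l3 := by rw [hσ₁]; ring
    rw [this]; exact lt_of_le_of_lt hvl2l3 hr1
  · have : σ₂ - l1 * (l2 + l3) = l2 * l3 := by rw [hσ₂]; ring
    rw [this, v.map_mul, hr2, hvl3, mul_one]; exact hr1
  · have hid : (l2 + l3 - 2) * (l1 * l2 - 1) = l1 * (l2 - 1) ^ 2 := by
      linear_combination heq
    have := congrArg v hid
    rw [v.map_mul, hml1, v.map_mul, v.map_pow, hr2'] at this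
    have hpos : (0:ℝ) < v l1 := lt_trans one_pos hr1
    have h' : v (l2 + l3 - 2) * v l1 = 1 * v l1 := by
      rw [one_pow, mul_one] at this; linarith
    exact mul_right_cancel₀ (ne_of_gt hpos) h'
end

section
/- Let K be a field equipped with a nonarchimedean absolute value |·|, and let λ₁, λ₂, λ₃ ∈ K, each different from 1, satisfy the fixed-point residue formula. Suppose |λ₁| > 1 and |λ₂| < 1. Set σ₁ = λ₁ + λ₂ + λ₃ and σ₂ = λ₁λ₂ + λ₁λ₃ + λ₂λ₃. Then |λ₃| > 1, |σ₁| < |λ₁| · |λ₃|, and |σ₂ − λ₁λ₃| < |λ₁| · |λ₃|. (Hence [σ₁ : σ₂ : 1] specializes to the boundary point [0 : 1 : 0] of the compactified moduli space; this is the potential constant reduction stratum (W4).) -/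
/-- potential constant reduction stratum (W4): If `λ₁, λ₂, λ₃`, each different
from `1`, satisfy the fixed-point residue formula, with `|λ₁| > 1` and `|λ₂| < 1`, then for
`σ₁ = λ₁+λ₂+λ₃` and `σ₂ = λ₁λ₂+λ₁λ₃+λ₂λ₃` one has `|λ₃| > 1`, `|σ₁| < |λ₁|⬝|λ₃|`, and
`|σ₂ − λ₁λ₃| < |λ₁|⬝|λ₃|`. -/
theorem stmt_15 {K : Type*} [Field K] (v : AbsoluteValue K ℝ) (hna : IsNonarchimedean v)
    (l1 l2 l3 : K) (h1 : l1 ≠ 1) (h2 : l2 ≠ 1) (h3 : l3 ≠ 1)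
    (hres : 1 / (1 - l1) + 1 / (1 - l2) + 1 / (1 - l3) = 1)
    (hr1 : 1 < v l1) (hr2 : v l2 < 1)
    (σ₁ σ₂ : K) (hσ₁ : σ₁ = l1 + l2 + l3) (hσ₂ : σ₂ = l1 * l2 + l1 * l3 + l2 * l3) :
    1 < v l3 ∧ v σ₁ < v l1 * v l3 ∧ v (σ₂ - l1 * l3) < v l1 * v l3 := by
  have h1' : (1:K) - l1 ≠ 0 := sub_ne_zero.mpr (Ne.symm h1)
  have h2' : (1:K) - l2 ≠ 0 := sub_ne_zero.mpr (Ne.symm h2)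
  have h3' : (1:K) - l3 ≠ 0 := sub_ne_zero.mpr (Ne.symm h3)
  have key : l1 * l2 * l3 = l1 + l2 + l3 - 2 := by
    field_simp at hres
    linear_combination hres
  have hv1 : v 1 = 1 := v.map_one
  have h2le : v 2 ≤ 1 := by
    have := hna (1:K) 1
    norm_num at this
    exact this
  have hvneg1 : v (-1 : K) = 1 := by simpa using v.map_neg 1
  have hsub1 : ∀ x : K, v (x - 1) ≤ max (v x) 1 := by
    intro x
    have := hna x (-1)
    simpa [sub_eq_add_neg, hvneg1] using this
  -- (a) : 1 < v l3
  have hr3 : 1 < v l3 := by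
    by_contra h
    push_neg at h
    have hx : v (l2 * l3) < 1 := by
      rw [v.map_mul]
      nlinarith [v.nonneg l2, v.nonneg l3]
    have hone : v (l2 * l3 - 1) = 1 := by
      have hle : v (l2 * l3 - 1) ≤ 1 := by
        have := hsub1 (l2 * l3)
        have hm : max (v (l2 * l3)) 1 = 1 := max_eq_right hx.le
        linarith [hm ▸ this]
      have hge : (1:ℝ) ≤ v (l2 * l3 - 1) := by
        have h' := hna (1 - l2 * l3) (l2 * l3)
        have he : (1 - l2 * l3) + l2 * l3 = (1:K) := by ring
        rw [he, hv1] at h'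
        have hneg : v (1 - l2 * l3) = v (l2 * l3 - 1) := by
          rw [show (1:K) - l2*l3 = -(l2*l3 - 1) by ring, v.map_neg]
        rw [hneg] at h'
        rcases max_cases (v (l2 * l3 - 1)) (v (l2 * l3)) with ⟨he1, _⟩ | ⟨he1, _⟩ <;>
          rw [he1] at h' <;> linarith
      linarith
    have heq : l1 * (l2 * l3 - 1) = (l2 - 1) + (l3 - 1) := by linear_combination key
    have hL : v (l1 * (l2 * l3 - 1)) = v l1 := by
      rw [v.map_mul, hone, mul_one]
    have hR : v ((l2 - 1) + (l3 - 1)) ≤ 1 := by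
      have := hna (l2 - 1) (l3 - 1)
      have a1 : v (l2 - 1) ≤ 1 := le_trans (hsub1 l2) (by simp [max_le_iff]; linarith)
      have a2 : v (l3 - 1) ≤ 1 := le_trans (hsub1 l3) (by simp [max_le_iff]; exact h)
      calc v ((l2 - 1) + (l3 - 1)) ≤ max (v (l2 - 1)) (v (l3 - 1)) := this
        _ ≤ 1 := max_le a1 a2
    rw [heq] at hL
    linarith [hL ▸ hR]
  refine ⟨hr3, ?_, ?_⟩
  · -- v σ₁ < v l1 * v l3
    have heq : σ₁ = l1 * l2 * l3 + 2 := by rw [hσ₁]; linear_combination -key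
    have hbound : v σ₁ ≤ max (v (l1 * l2 * l3)) (v 2) := by
      rw [heq]; exact hna _ _
    have hm : v (l1 * l2 * l3) < v l1 * v l3 := by
      rw [v.map_mul, v.map_mul]
      nlinarith [mul_pos (lt_trans zero_lt_one hr1) (lt_trans zero_lt_one hr3)]
    have h2' : v 2 < v l1 * v l3 := by nlinarith
    calc v σ₁ ≤ max (v (l1 * l2 * l3)) (v 2) := hbound
      _ < v l1 * v l3 := max_lt hm h2'
  · have heq : σ₂ - l1 * l3 = l1 * l2 + l2 * l3 := by rw [hσ₂]; ring
    have hbound : v (σ₂ - l1 * l3) ≤ max (v (l1 * l2)) (v (l2 * l3)) := by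
      rw [heq]; exact hna _ _
    have hm1 : v (l1 * l2) < v l1 * v l3 := by
      rw [v.map_mul]; nlinarith [v.nonneg l1]
    have hm2 : v (l2 * l3) < v l1 * v l3 := by
      rw [v.map_mul]; nlinarith [v.nonneg l3]
    calc v (σ₂ - l1 * l3) ≤ max (v (l1 * l2)) (v (l2 * l3)) := hbound
      _ < v l1 * v l3 := max_lt hm1 hm2
end
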